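/- Assume the standing assumptions (a), (e) and (f). Then 𝓛_δ is Fréchet differentiable at h from the strong to the weak norm, with differential d𝓛_{δ,h} = L_{δ,h} + ∂L_{δ,h}: namely, lim over g ∈ V_s with ‖g‖_s → 0 of ‖𝓛_δ(h+g) − 𝓛_δ(h) − d𝓛_{δ,h}(g)‖_w / ‖g‖_s equals 0. Moreover, if (b) also holds with constant C, then d𝓛_{δ,h} : V_s → V_s is a bounded operator with ‖d𝓛_{δ,h}‖_{s→s} ≤ δ C₀ ‖h‖_ss + C. -/
import Mathlib


open Filter MeasureTheory

/-- Under the standing assumptions (a), (e), (f), the self-consistent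
transfer operator `𝓛_δ(f) = L_{δ,f}(f)` is Fréchet differentiable at its fixed point `h`
from the strong to the weak norm, with differential `d𝓛_{δ,h} = L_{δ,h} + ∂L_{δ,h}`;
and if moreover (b) holds with constant `C`, then `d𝓛_{δ,h} : V_s → V_s` is bounded with
norm at most `δ C₀ ‖h‖_ss + C`. -/
theorem frechet_differential_of_STO
    {V : Type*} [AddCommGroup V] [Module ℝ V]
    -- the three norms (weak, strong, strongest); the ambient space is `B_w = V`
    (nw ns nss : Seminorm ℝ V)
    -- the subspaces `B_s` and `B_ss`
    (Bs Bss : Submodule ℝ V)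
    (hBssBs : Bss ≤ Bs)
    (hwle : ∀ x ∈ Bs, nw x ≤ ns x)
    (hsle : ∀ x ∈ Bss, ns x ≤ nss x)
    -- total-mass functional `μ ↦ μ(X)`
    (mass : V →ₗ[ℝ] ℝ)
    -- coupling strength
    (δ : ℝ) (hδ : 0 ≤ δ)
    -- the family of Markov bounded operators `f ↦ L_{δ,f}`, preserving `B_s` and `B_ss`
    (L : V → Module.End ℝ V)
    (hMarkov : ∀ f x, mass (L f x) = mass x)
    (hpres_s : ∀ f, ∀ x ∈ Bs, L f x ∈ Bs)
    (hpres_ss : ∀ f, ∀ x ∈ Bss, L f x ∈ Bss)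
    -- (a) fixed point: `𝓛_δ h = L_{δ,h} h = h` with `h ∈ B_ss`
    (h : V) (hh : h ∈ Bss) (hfix : L h h = h)
    -- (b) boundedness in the three operator norms, with constant `C`
    (C : ℝ) (hC : 0 ≤ C)
    (hb_w : ∀ f x, nw (L f x) ≤ C * nw x)
    (hb_s : ∀ f, ∀ x ∈ Bs, ns (L f x) ≤ C * ns x)
    (hb_ss : ∀ f, ∀ x ∈ Bss, nss (L f x) ≤ C * nss x)
    -- (e) regularity of the family of operators
    (C₀ : ℝ) (hC₀ : 0 < C₀)
    (he₁ : ∀ f ∈ Bs, ∀ g ∈ Bs, ns (L f h - L g h) ≤ δ * C₀ * nss h * nw (f - g))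
    (C₁ : ℝ) (hC₁ : 0 < C₁)
    (he₂ : ∀ f₁ f₂ : V, ∀ g ∈ Bs, nw (L f₁ g - L f₂ g) ≤ δ * C₁ * ns g * nw (f₁ - f₂))
    -- (f) differentiability of the family at `h`: a bounded linear `∂L_{δ,h} : V_w → V_s`
    (dL : Module.End ℝ V)
    (hdL_maps : ∀ g : V, mass g = 0 → dL g ∈ Bs ∧ mass (dL g) = 0)
    (hdL_bdd : ∃ K : ℝ, ∀ g : V, mass g = 0 → ns (dL g) ≤ K * nw g)
    (hf : ∀ ε > (0:ℝ), ∃ r > (0:ℝ), ∀ g : V, mass g = 0 → nw g ≤ r →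
      ns (L (h + g) h - L h h - dL g) ≤ ε * nw g) :
    -- conclusion 1: Fréchet differentiability of `𝓛_δ` at `h` (strong → weak), with
    -- differential `d𝓛_{δ,h} = L_{δ,h} + ∂L_{δ,h}`
    (∀ ε > (0:ℝ), ∃ r > (0:ℝ), ∀ g ∈ Bs, mass g = 0 → ns g ≤ r →
      nw (L (h + g) (h + g) - L h h - (L h + dL) g) ≤ ε * ns g)
    -- conclusion 2: `d𝓛_{δ,h} : V_s → V_s` is bounded with norm ≤ `δ C₀ ‖h‖_ss + C`
    ∧ (∀ g ∈ Bs, mass g = 0 → (L h + dL) g ∈ Bs ∧ mass ((L h + dL) g) = 0)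
    ∧ (∀ g ∈ Bs, mass g = 0 →
      ns ((L h + dL) g) ≤ (δ * C₀ * nss h + C) * ns g) := by

  have hhs : h ∈ Bs := hBssBs hh
  -- key bound on dL
  have hdL_key : ∀ g ∈ Bs, mass g = 0 → ns (dL g) ≤ δ * C₀ * nss h * nw g := by
    intro g hg hm
    refine le_of_forall_pos_le_add ?_
    intro ε hε
    obtain ⟨r, hr, hfr⟩ := hf (ε / (nw g + 1)) (by positivity)
    have hnwg : 0 ≤ nw g := apply_nonneg nw g
    set t : ℝ := r / (nw g + 1) with ht
    have htpos : 0 < t := by positivity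
    have hnws : nw (t • g) = t * nw g := by
      rw [map_smul_eq_mul, Real.norm_eq_abs, abs_of_pos htpos]
    have hmass : mass (t • g) = 0 := by simp [hm]
    have h1 := hfr (t • g) hmass (by
      rw [hnws, ht]
      rw [div_mul_eq_mul_div, div_le_iff₀ (by positivity)]
      nlinarith)
    have h2 := he₁ (h + t • g) (Bs.add_mem hhs (Bs.smul_mem t hg)) h hhs
    rw [add_sub_cancel_left] at h2
    rw [hnws] at h1 h2
    have hdls : dL (t • g) = t • dL g := map_smul dL t g
    have h3 : ns (dL (t • g)) ≤ ns (L (h + t • g) h - L h h)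
        + ns (L (h + t • g) h - L h h - dL (t • g)) := by
      have key := map_sub_le_add ns (L (h + t • g) h - L h h)
        (L (h + t • g) h - L h h - dL (t • g))
      have heq : (L (h + t • g) h - L h h)
          - (L (h + t • g) h - L h h - dL (t • g)) = dL (t • g) := by abel
      rwa [heq] at key
    have hsmuln : ns (dL (t • g)) = t * ns (dL g) := by
      rw [hdls, map_smul_eq_mul, Real.norm_eq_abs, abs_of_pos htpos]
    rw [hsmuln] at h3
    have h4 : t * ns (dL g) ≤ t * (δ * C₀ * nss h * nw g) + t * (ε / (nw g + 1) * nw g) := by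
      calc t * ns (dL g) ≤ δ * C₀ * nss h * (t * nw g) + ε / (nw g + 1) * (t * nw g) := by
            linarith
        _ = t * (δ * C₀ * nss h * nw g) + t * (ε / (nw g + 1) * nw g) := by ring
    have h5 : ns (dL g) ≤ δ * C₀ * nss h * nw g + ε / (nw g + 1) * nw g :=
      le_of_mul_le_mul_left (by linarith [h4]) htpos |>.trans le_rfl
    have h6 : ε / (nw g + 1) * nw g ≤ ε := by
      rw [div_mul_eq_mul_div, div_le_iff₀ (by positivity)]
      nlinarith
    linarith
  refine ⟨?_, ?_, ?_⟩
  · -- conclusion 1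
    intro ε hε
    obtain ⟨r₀, hr₀, hfr⟩ := hf (ε / 2) (by linarith)
    refine ⟨min r₀ (ε / (2 * (δ * C₁ + 1))), lt_min hr₀ (by positivity), ?_⟩
    intro g hg hm hns
    have hnwg : nw g ≤ ns g := hwle g hg
    have hnw0 : 0 ≤ nw g := apply_nonneg nw g
    have hns0 : 0 ≤ ns g := apply_nonneg ns g
    have h1 := hfr g hm (hnwg.trans (hns.trans (min_le_left _ _)))
    have h2 := he₂ (h + g) h g hg
    rw [add_sub_cancel_left] at h2
    have hid : L (h + g) (h + g) - L h h - (L h + dL) g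
        = (L (h + g) h - L h h - dL g) + (L (h + g) g - L h g) := by
      simp only [map_add, LinearMap.add_apply]
      abel
    have hmem : L (h + g) h - L h h - dL g ∈ Bs :=
      Bs.sub_mem (Bs.sub_mem (hpres_s _ h hhs) (hpres_s _ h hhs)) (hdL_maps g hm).1
    have htri : nw (L (h + g) (h + g) - L h h - (L h + dL) g)
        ≤ nw (L (h + g) h - L h h - dL g) + nw (L (h + g) g - L h g) := by
      rw [hid]; exact map_add_le_add nw _ _
    have hb1 : nw (L (h + g) h - L h h - dL g) ≤ ε / 2 * nw g :=
      (hwle _ hmem).trans h1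
    have hsmall : δ * C₁ * ns g ≤ ε / 2 := by
      have h7 := hns.trans (min_le_right r₀ (ε / (2 * (δ * C₁ + 1))))
      have hpos : (0:ℝ) < 2 * (δ * C₁ + 1) := by positivity
      rw [le_div_iff₀ hpos] at h7
      nlinarith [mul_nonneg hδ hC₁.le]
    nlinarith [mul_nonneg (mul_nonneg hδ hC₁.le) hns0]
  · -- conclusion 2: mapping
    intro g hg hm
    refine ⟨Bs.add_mem (hpres_s _ g hg) (hdL_maps g hm).1, ?_⟩
    simp only [LinearMap.add_apply, map_add, hMarkov, hm, (hdL_maps g hm).2, add_zero]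
  · -- conclusion 2: bound
    intro g hg hm
    have h1 : ns ((L h + dL) g) ≤ ns (L h g) + ns (dL g) := map_add_le_add ns _ _
    have h2 := hb_s h g hg
    have h3 := (hdL_key g hg hm).trans (by
      have := hwle g hg
      have h0 : 0 ≤ δ * C₀ * nss h := by positivity
      exact mul_le_mul_of_nonneg_left this h0)
    nlinarith
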